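/- The automorphisms θ_v and the involution ω of R[c_1,c_2,...][v] satisfy ω ∘ θ_v = θ_{-v} ∘ ω. -/

import Mathlib

open MvPolynomial

/-- The ring `R[c_1,c_2,…][v]`: `some k` represents `c_{k+1}`, `none` represents `v`. -/
abbrev CVRing (R : Type*) [CommRing R] := MvPolynomial (Option ℕ) R

/-- The `R`-algebra endomorphism `θ_w`, fixing `v`, with
`θ_w(c_k) = Σ_{i=1}^k C(k-1,i-1) w^{k-i} c_i`. -/
noncomputable def theta (R : Type*) [CommRing R] (w : CVRing R) : CVRing R →ₐ[R] CVRing R :=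
  aeval (fun s => match s with
    | some m => ∑ j ∈ Finset.range (m + 1),
        (Nat.choose m j : CVRing R) * w ^ (m - j) * X (some j)
    | none => X none)

/-- The series `c(t) = 1 + c_1 t + c_2 t² + ⋯`. -/
noncomputable def cSeries (R : Type*) [CommRing R] : PowerSeries (CVRing R) :=
  PowerSeries.mk fun k => if k = 0 then 1 else X (some (k - 1))

/-- The `R[v]`-algebra involution `ω`, fixing `v` and sending `c(t)` to `1/c(-t)`. -/
noncomputable def omegaHom (R : Type*) [CommRing R] : CVRing R →ₐ[R] CVRing R :=
  aeval (fun s => match s with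
    | some k => PowerSeries.coeff (R := CVRing R) (k + 1)
        ((PowerSeries.rescale (-1) (cSeries R)).invOfUnit 1)
    | none => X none)

section Phi
variable {S : Type*} [CommRing S] (v : S)

/-- Geometric series `1/(1-vt)`. -/
noncomputable def geomS : PowerSeries S := PowerSeries.mk fun n => v ^ n

/-- `T = t/(1-vt)`. -/
noncomputable def Tser : PowerSeries S := PowerSeries.X * geomS v

/-- Substitution `f(t) ↦ f(t/(1-vt))`. -/
noncomputable def Phi (f : PowerSeries S) : PowerSeries S :=
  PowerSeries.mk fun n => ∑ j ∈ Finset.range (n + 1),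
    PowerSeries.coeff (R := S) j f * PowerSeries.coeff (R := S) n (Tser v ^ j)

lemma geomS_mul : (1 - PowerSeries.X * PowerSeries.C (R := S) v) * geomS v = 1 := by
  ext n
  cases n with
  | zero => simp [geomS, PowerSeries.coeff_zero_eq_constantCoeff]
  | succ n =>
    rw [sub_mul, one_mul, map_sub]
    rw [mul_assoc, PowerSeries.coeff_succ_X_mul]
    simp [geomS, PowerSeries.coeff_C_mul, pow_succ, mul_comm]

lemma coeff_geomS_pow (k m : ℕ) :
    PowerSeries.coeff (R := S) m (geomS v ^ (k + 1)) = (Nat.choose (m + k) k : S) * v ^ m := by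
  induction k generalizing m with
  | zero => simp [geomS]
  | succ k ih =>
    rw [pow_succ, PowerSeries.coeff_mul, Finset.Nat.sum_antidiagonal_eq_sum_range_succ_mk]
    have : ∀ i ∈ Finset.range (m + 1),
        PowerSeries.coeff (R := S) i (geomS v ^ (k + 1)) * PowerSeries.coeff (R := S) (m - i) (geomS v)
          = (Nat.choose (i + k) k : S) * v ^ m := by
      intro i hi
      rw [ih i]
      simp only [geomS, PowerSeries.coeff_mk]
      rw [mul_assoc, ← pow_add]
      have hi' := Finset.mem_range.mp hi
      congr 2
      omega
    rw [Finset.sum_congr rfl this, ← Finset.sum_mul, ← Nat.cast_sum,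
      Nat.sum_range_add_choose m k]
    rfl

lemma coeff_Tser_pow_of_lt {n j : ℕ} (h : n < j) :
    PowerSeries.coeff (R := S) n (Tser v ^ j) = 0 := by
  rw [Tser, mul_pow, PowerSeries.coeff_X_pow_mul']
  rw [if_neg (by omega)]

lemma coeff_Tser_pow_succ (N j : ℕ) (h : j ≤ N) :
    PowerSeries.coeff (R := S) (N + 1) (Tser v ^ (j + 1))
      = (Nat.choose N j : S) * v ^ (N - j) := by
  rw [Tser, mul_pow, PowerSeries.coeff_X_pow_mul', if_pos (by omega),
    coeff_geomS_pow]
  have h1 : N + 1 - (j + 1) = N - j := by omega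
  rw [h1, Nat.sub_add_cancel h]

lemma Phi_one : Phi v (1 : PowerSeries S) = 1 := by
  ext n
  rw [Phi, PowerSeries.coeff_mk]
  rw [Finset.sum_eq_single 0]
  · simp
  · intro j hj hj0
    rw [PowerSeries.coeff_one, if_neg hj0, zero_mul]
  · intro h
    simp at h

lemma coeff_Phi_le (h : PowerSeries S) {p n : ℕ} (hp : p ≤ n) :
    PowerSeries.coeff (R := S) p (Phi v h)
      = ∑ a ∈ Finset.range (n + 1),
          PowerSeries.coeff (R := S) a h * PowerSeries.coeff (R := S) p (Tser v ^ a) := by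
  rw [Phi, PowerSeries.coeff_mk]
  apply Finset.sum_subset
  · intro a ha
    simp only [Finset.mem_range] at ha ⊢
    omega
  · intro a ha ha'
    simp only [Finset.mem_range] at ha ha'
    rw [coeff_Tser_pow_of_lt v (by omega), mul_zero]

lemma Phi_mul (f g : PowerSeries S) : Phi v (f * g) = Phi v f * Phi v g := by
  ext n
  have key : ∀ a b : ℕ,
      (∑ pq ∈ Finset.HasAntidiagonal.antidiagonal n,
        PowerSeries.coeff (R := S) pq.1 (Tser v ^ a) * PowerSeries.coeff (R := S) pq.2 (Tser v ^ b))
        = PowerSeries.coeff (R := S) n (Tser v ^ (a + b)) := by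
    intro a b
    rw [← PowerSeries.coeff_mul, ← pow_add]
  -- RHS as a sum over the square
  have hR : PowerSeries.coeff (R := S) n (Phi v f * Phi v g)
      = ∑ ab ∈ Finset.range (n + 1) ×ˢ Finset.range (n + 1),
          PowerSeries.coeff (R := S) ab.1 f * PowerSeries.coeff (R := S) ab.2 g *
            PowerSeries.coeff (R := S) n (Tser v ^ (ab.1 + ab.2)) := by
    rw [PowerSeries.coeff_mul]
    have step1 : ∀ pq ∈ Finset.HasAntidiagonal.antidiagonal n,
        PowerSeries.coeff (R := S) pq.1 (Phi v f) * PowerSeries.coeff (R := S) pq.2 (Phi v g)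
          = ∑ ab ∈ Finset.range (n + 1) ×ˢ Finset.range (n + 1),
              (PowerSeries.coeff (R := S) ab.1 f * PowerSeries.coeff (R := S) pq.1 (Tser v ^ ab.1)) *
              (PowerSeries.coeff (R := S) ab.2 g * PowerSeries.coeff (R := S) pq.2 (Tser v ^ ab.2)) := by
      intro pq hpq
      have hpq' := Finset.HasAntidiagonal.mem_antidiagonal.mp hpq
      rw [coeff_Phi_le v f (show pq.1 ≤ n by omega),
        coeff_Phi_le v g (show pq.2 ≤ n by omega),
        Finset.sum_mul_sum, ← Finset.sum_product']
    rw [Finset.sum_congr rfl step1, Finset.sum_comm]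
    refine Finset.sum_congr rfl fun ab _ => ?_
    rw [← key ab.1 ab.2, Finset.mul_sum]
    refine Finset.sum_congr rfl fun pq _ => ?_
    ring
  -- LHS as a sum over the triangle
  have hL : PowerSeries.coeff (R := S) n (Phi v (f * g))
      = ∑ j ∈ Finset.range (n + 1), ∑ ab ∈ Finset.HasAntidiagonal.antidiagonal j,
          PowerSeries.coeff (R := S) ab.1 f * PowerSeries.coeff (R := S) ab.2 g *
            PowerSeries.coeff (R := S) n (Tser v ^ (ab.1 + ab.2)) := by
    rw [coeff_Phi_le v (f * g) (le_refl n)]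
    refine Finset.sum_congr rfl fun j _ => ?_
    rw [PowerSeries.coeff_mul, Finset.sum_mul]
    refine Finset.sum_congr rfl fun ab hab => ?_
    rw [Finset.HasAntidiagonal.mem_antidiagonal.mp hab]
  -- triangle = square since off-triangle terms vanish
  rw [hR, hL]
  rw [← Finset.sum_biUnion]
  · apply Finset.sum_subset
    · intro ab hab
      simp only [Finset.mem_biUnion, Finset.mem_range, Finset.HasAntidiagonal.mem_antidiagonal] at hab
      obtain ⟨j, hj, hab2⟩ := hab
      simp only [Finset.mem_product, Finset.mem_range]
      omega
    · intro ab hab hab'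
      simp only [Finset.mem_biUnion, Finset.mem_range, Finset.HasAntidiagonal.mem_antidiagonal] at hab'
      push_neg at hab'
      have : n < ab.1 + ab.2 := by
        by_contra hc
        exact hab' (ab.1 + ab.2) (by omega) rfl
      rw [coeff_Tser_pow_of_lt v this, mul_zero]
  · intro i hi j hj hij
    simp only [Finset.disjoint_left, Finset.HasAntidiagonal.mem_antidiagonal]
    intro ab h1 h2
    exact hij (h1.symm.trans h2)

end Phi

section Main
variable (R : Type*) [CommRing R]

noncomputable def Aser : PowerSeries (CVRing R) := PowerSeries.rescale (-1) (cSeries R)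
noncomputable def Dser : PowerSeries (CVRing R) := (Aser R).invOfUnit 1

lemma constantCoeff_Aser : PowerSeries.constantCoeff (R := CVRing R) (Aser R) = 1 := by
  rw [← PowerSeries.coeff_zero_eq_constantCoeff, Aser, PowerSeries.coeff_rescale]
  simp [cSeries]

lemma AD : Aser R * Dser R = 1 :=
  PowerSeries.mul_invOfUnit _ 1 (by rw [constantCoeff_Aser]; rfl)

lemma theta_X_none (w : CVRing R) : theta R w (X none) = X none := by
  simp [theta]

lemma theta_X_some (w : CVRing R) (m : ℕ) :
    theta R w (X (some m)) = ∑ j ∈ Finset.range (m + 1),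
      (Nat.choose m j : CVRing R) * w ^ (m - j) * X (some j) := by
  simp [theta]

lemma omega_X_none : omegaHom R (X none) = X none := by
  simp [omegaHom]

lemma omega_X_some (k : ℕ) :
    omegaHom R (X (some k)) = PowerSeries.coeff (R := CVRing R) (k + 1) (Dser R) := by
  simp [omegaHom, Dser, Aser]

lemma neg_one_pow_lem {S : Type*} [CommRing S] {N j : ℕ} (h : j ≤ N) :
    (-1 : S) ^ (N + 1) * (-1) ^ (N - j) = (-1) ^ (j + 1) := by
  rw [← pow_add, show N + 1 + (N - j) = 2 * (N - j) + (j + 1) by omega,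
    pow_add, pow_mul, neg_one_sq, one_pow, one_mul]

lemma map_theta_A :
    PowerSeries.map (theta R (-(X none : CVRing R))).toRingHom (Aser R)
      = Phi (X none : CVRing R) (Aser R) := by
  apply PowerSeries.ext
  intro n
  rw [PowerSeries.coeff_map]
  cases n with
  | zero =>
    rw [Phi, PowerSeries.coeff_mk]
    simp only [Aser, PowerSeries.coeff_rescale, cSeries, PowerSeries.coeff_mk]
    simp
  | succ N =>
    -- RHS
    rw [Phi, PowerSeries.coeff_mk, Finset.sum_range_succ']
    have h0 : PowerSeries.coeff (R := CVRing R) 0 (Aser R) *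
        PowerSeries.coeff (R := CVRing R) (N + 1) (Tser (X none : CVRing R) ^ 0) = 0 := by
      simp
    rw [h0, add_zero]
    have hterm : ∀ j ∈ Finset.range (N + 1),
        PowerSeries.coeff (R := CVRing R) (j + 1) (Aser R) *
          PowerSeries.coeff (R := CVRing R) (N + 1) (Tser (X none : CVRing R) ^ (j + 1))
        = (-1 : CVRing R) ^ (j + 1) * X (some j) *
            ((Nat.choose N j : CVRing R) * (X none) ^ (N - j)) := by
      intro j hj
      have hjN := Finset.mem_range.mp hj
      rw [coeff_Tser_pow_succ _ N j (by omega)]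
      simp only [Aser, PowerSeries.coeff_rescale, cSeries, PowerSeries.coeff_mk]
      simp
    rw [Finset.sum_congr rfl hterm]
    -- LHS
    have hA : PowerSeries.coeff (R := CVRing R) (N + 1) (Aser R)
        = (-1 : CVRing R) ^ (N + 1) * X (some N) := by
      simp only [Aser, PowerSeries.coeff_rescale, cSeries, PowerSeries.coeff_mk]
      simp
    rw [hA]
    simp only [AlgHom.toRingHom_eq_coe, RingHom.coe_coe, map_mul, map_pow, map_neg, map_one]
    rw [theta_X_some R (-(X none : CVRing R)) N]
    rw [Finset.mul_sum]
    refine Finset.sum_congr rfl fun j hj => ?_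
    have hjN := Finset.mem_range.mp hj
    have hneg : (-(X none : CVRing R)) ^ (N - j) = (-1) ^ (N - j) * (X none) ^ (N - j) := by
      rw [neg_pow]
    rw [hneg]
    have hpow := neg_one_pow_lem (S := CVRing R) (N := N) (j := j) (by omega)
    calc (-1 : CVRing R) ^ (N + 1) * ((Nat.choose N j : CVRing R) *
            ((-1) ^ (N - j) * (X none) ^ (N - j)) * X (some j))
        = ((-1 : CVRing R) ^ (N + 1) * (-1) ^ (N - j)) *
            ((Nat.choose N j : CVRing R) * (X none) ^ (N - j) * X (some j)) := by ring
      _ = (-1 : CVRing R) ^ (j + 1) * X (some j) *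
            ((Nat.choose N j : CVRing R) * (X none) ^ (N - j)) := by rw [hpow]; ring

lemma map_theta_D :
    PowerSeries.map (theta R (-(X none : CVRing R))).toRingHom (Dser R)
      = Phi (X none : CVRing R) (Dser R) := by
  have h1 : Phi (X none : CVRing R) (Aser R) * Phi (X none : CVRing R) (Dser R) = 1 := by
    rw [← Phi_mul, AD, Phi_one]
  have h2 : Phi (X none : CVRing R) (Aser R) *
      PowerSeries.map (theta R (-(X none : CVRing R))).toRingHom (Dser R) = 1 := by
    rw [← map_theta_A, ← map_mul, AD, map_one]
  calc PowerSeries.map (theta R (-(X none : CVRing R))).toRingHom (Dser R)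
      = (Phi (X none : CVRing R) (Aser R) * Phi (X none : CVRing R) (Dser R)) *
          PowerSeries.map (theta R (-(X none : CVRing R))).toRingHom (Dser R) := by
        rw [h1, one_mul]
    _ = Phi (X none : CVRing R) (Dser R) * (Phi (X none : CVRing R) (Aser R) *
          PowerSeries.map (theta R (-(X none : CVRing R))).toRingHom (Dser R)) := by ring
    _ = Phi (X none : CVRing R) (Dser R) := by rw [h2, mul_one]

lemma theta_coeff_D (m : ℕ) :
    theta R (-(X none : CVRing R)) (PowerSeries.coeff (R := CVRing R) (m + 1) (Dser R))
      = ∑ j ∈ Finset.range (m + 1),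
          (Nat.choose m j : CVRing R) * (X none) ^ (m - j) *
            PowerSeries.coeff (R := CVRing R) (j + 1) (Dser R) := by
  have h : theta R (-(X none : CVRing R)) (PowerSeries.coeff (R := CVRing R) (m + 1) (Dser R))
      = PowerSeries.coeff (R := CVRing R) (m + 1)
          (PowerSeries.map (theta R (-(X none : CVRing R))).toRingHom (Dser R)) := by
    rw [PowerSeries.coeff_map]
    rfl
  rw [h, map_theta_D, Phi, PowerSeries.coeff_mk, Finset.sum_range_succ']
  have h0 : PowerSeries.coeff (R := CVRing R) 0 (Dser R) *
      PowerSeries.coeff (R := CVRing R) (m + 1) (Tser (X none : CVRing R) ^ 0) = 0 := by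
    simp
  rw [h0, add_zero]
  refine Finset.sum_congr rfl fun j hj => ?_
  have hjm := Finset.mem_range.mp hj
  rw [coeff_Tser_pow_succ _ m j (by omega)]
  ring

end Main

/-- `ω ∘ θ_v = θ_{-v} ∘ ω` on `R[c_1,c_2,…][v]`. -/
theorem omega_theta (R : Type*) [CommRing R] :
    ∀ f : CVRing R,
      omegaHom R (theta R (X none) f) = theta R (-(X none)) (omegaHom R f) := by
  have h : (omegaHom R).comp (theta R (X none))
      = (theta R (-(X none))).comp (omegaHom R) := by
    apply MvPolynomial.algHom_ext
    intro s
    cases s with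
    | none =>
      simp only [AlgHom.comp_apply, theta_X_none, omega_X_none]
    | some m =>
      simp only [AlgHom.comp_apply, theta_X_some, omega_X_some]
      rw [map_sum, theta_coeff_D]
      refine Finset.sum_congr rfl fun j hj => ?_
      rw [map_mul, map_mul, map_pow, map_natCast, omega_X_none, omega_X_some]
  intro f
  exact AlgHom.congr_fun h f
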